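/- The 'discrete' q-Laplace transformation satisfies z L_{q,1}^{[d]}(δ_q g) = p L_{q,1}^{[d]}(ζ g) − p z L_{q,1}^{[d]}(g), where p = 1/q, for any g analytic along the discrete q-spiral q^ℤ e^{id} with q-exponential growth ensuring convergence of all series involved. -/

import Mathlib

open scoped BigOperators
noncomputable section

/-- The q-factorial `[n]_q! = ∏_{l=1}^n (q^l - 1)/(q - 1)`. -/
def qFact (q : ℝ) (n : ℕ) : ℝ := ∏ l ∈ Finset.range n, (q ^ (l + 1) - 1) / (q - 1)

/-- The q-exponential `e_q(w) = Σ_{n≥0} w^n/[n]_q!`. -/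
def qExp (q : ℝ) (w : ℂ) : ℂ := ∑' n : ℕ, w ^ n / (qFact q n : ℂ)

/-- The "discrete" q-Laplace transform of order 1 in direction `d` (a Jackson-integral sum):
`L_{q,1}^{[d]}(g)(z) = (q−1) e^{id} Σ_{l∈ℤ} q^l g(q^l e^{id}) / (z e_q(q^{l+1} e^{id}/z))`. -/
def qLaplace (q d : ℝ) (g : ℂ → ℂ) (z : ℂ) : ℂ :=
  ((q : ℂ) - 1) * Complex.exp (Complex.I * d) *
    ∑' l : ℤ, (q : ℂ) ^ l * g ((q : ℂ) ^ l * Complex.exp (Complex.I * d)) /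
      (z * qExp q ((q : ℂ) ^ (l + 1) * Complex.exp (Complex.I * d) / z))

lemma qFact_pos {q : ℝ} (hq : 1 < q) (n : ℕ) : 0 < qFact q n := by
  apply Finset.prod_pos
  intro l _
  apply div_pos _ (by linarith)
  have : (1:ℝ) < q ^ (l+1) := one_lt_pow₀ hq (Nat.succ_ne_zero l)
  linarith

lemma qFact_succ (q : ℝ) (n : ℕ) :
    qFact q (n+1) = qFact q n * ((q ^ (n+1) - 1) / (q - 1)) := by
  simp only [qFact, Finset.prod_range_succ]

lemma qExp_summable {q : ℝ} (hq : 1 < q) (w : ℂ) :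
    Summable (fun n : ℕ => w ^ n / (qFact q n : ℂ)) := by
  apply summable_of_ratio_norm_eventually_le (r := 1/2) (by norm_num)
  have htop : Filter.Tendsto (fun n : ℕ => q ^ (n+1)) Filter.atTop Filter.atTop :=
    (tendsto_pow_atTop_atTop_of_one_lt hq).comp (Filter.tendsto_add_atTop_nat 1)
  filter_upwards [htop.eventually_ge_atTop (2 * ‖w‖ * (q - 1) + 1)] with n hn
  have hqn : (0:ℝ) < q ^ (n+1) - 1 := by
    have : (1:ℝ) < q ^ (n+1) := one_lt_pow₀ hq (Nat.succ_ne_zero n)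
    linarith
  have hf : (0:ℝ) < qFact q n := qFact_pos hq n
  rw [qFact_succ]
  have hd1 : ‖((qFact q n * ((q ^ (n+1) - 1) / (q - 1)) : ℝ) : ℂ)‖
      = qFact q n * ((q ^ (n+1) - 1) / (q - 1)) := by
    rw [Complex.norm_real, Real.norm_eq_abs, abs_of_pos]
    exact mul_pos hf (div_pos hqn (by linarith))
  have hd2 : ‖((qFact q n : ℝ) : ℂ)‖ = qFact q n := by
    rw [Complex.norm_real, Real.norm_eq_abs, abs_of_pos hf]
  have h1 : ‖w ^ (n+1) / ((qFact q n * ((q ^ (n+1) - 1) / (q - 1)) : ℝ) : ℂ)‖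
      = ‖w‖ * (q-1) / (q ^ (n+1) - 1) * (‖w ^ n / (qFact q n : ℂ)‖) := by
    rw [norm_div, norm_div, hd1, hd2, pow_succ, norm_mul, norm_pow]
    field_simp
  rw [h1]
  gcongr ?_ * _
  rw [div_le_div_iff₀ (by positivity) (by norm_num)]
  nlinarith [norm_nonneg w]

lemma qExp_funEq {q : ℝ} (hq : 1 < q) (w : ℂ) :
    qExp q ((q:ℂ) * w) = (1 + ((q:ℂ) - 1) * w) * qExp q w := by
  have hs := qExp_summable hq w
  have hkey : ∀ n : ℕ, ((q:ℂ) * w) ^ (n+1) / (qFact q (n+1) : ℂ)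
      = w ^ (n+1) / (qFact q (n+1) : ℂ) + ((q:ℂ)-1) * w * (w ^ n / (qFact q n : ℂ)) := by
    intro n
    have hf : (qFact q n : ℂ) ≠ 0 := by
      exact_mod_cast (qFact_pos hq n).ne'
    have hqn : ((q:ℂ) ^ (n+1) - 1) ≠ 0 := by
      have : (1:ℝ) < q ^ (n+1) := one_lt_pow₀ hq (Nat.succ_ne_zero n)
      intro h
      have : ((q:ℝ) ^ (n+1) - 1 : ℝ) = 0 := by exact_mod_cast h
      linarith
    have hq1 : ((q:ℂ) - 1) ≠ 0 := by
      intro h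
      have : (q - 1 : ℝ) = 0 := by exact_mod_cast h
      linarith
    rw [qFact_succ]
    push_cast
    field_simp
    ring
  have hs' : Summable (fun n : ℕ => ((q:ℂ)-1) * w * (w ^ n / (qFact q n : ℂ))) :=
    hs.mul_left _
  have hs2 : Summable (fun n : ℕ => w ^ (n+1) / (qFact q (n+1) : ℂ)) :=
    hs.comp_injective (add_left_injective 1)
  calc qExp q ((q:ℂ) * w)
      = ((q:ℂ)*w) ^ 0 / (qFact q 0 : ℂ) + ∑' n : ℕ, ((q:ℂ)*w) ^ (n+1) / (qFact q (n+1) : ℂ) := by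
        rw [qExp, Summable.tsum_eq_zero_add (qExp_summable hq _)]
    _ = w ^ 0 / (qFact q 0 : ℂ)
        + ∑' n : ℕ, (w ^ (n+1) / (qFact q (n+1) : ℂ) + ((q:ℂ)-1) * w * (w ^ n / (qFact q n : ℂ))) := by
        simp only [hkey, pow_zero]
    _ = (w ^ 0 / (qFact q 0 : ℂ) + ∑' n : ℕ, w ^ (n+1) / (qFact q (n+1) : ℂ))
        + ((q:ℂ)-1) * w * ∑' n : ℕ, w ^ n / (qFact q n : ℂ) := by
        rw [Summable.tsum_add hs2 hs', tsum_mul_left]; ring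
    _ = qExp q w + ((q:ℂ)-1) * w * qExp q w := by
        rw [qExp, Summable.tsum_eq_zero_add hs]
    _ = (1 + ((q:ℂ)-1) * w) * qExp q w := by ring

lemma tsum_parts (Q z w : ℂ) (hQ : Q ≠ 0) (hz : z ≠ 0) (F G H D : ℤ → ℂ)
    (hF : Summable F) (hG : Summable G) (hH : Summable H)
    (hDH : ∀ l, D l = (Q - 1) * H l + F l)
    (hDF : ∀ l, D l = (1/Q) * F (l+1) + ((Q-1)/(Q*z)) * G (l+1)) :
    z * ((Q - 1) * w * ∑' l, H l) =
      (1/Q) * ((Q - 1) * w * ∑' l, G l) - (1/Q) * z * ((Q - 1) * w * ∑' l, F l) := by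
  have h1 : ∑' l, D l = (Q - 1) * ∑' l, H l + ∑' l, F l := by
    simp only [hDH]
    rw [Summable.tsum_add (hH.mul_left _) hF, tsum_mul_left]
  have h3 : ∑' l : ℤ, ((1/Q) * F (l+1) + ((Q-1)/(Q*z)) * G (l+1))
      = ∑' l : ℤ, ((1/Q) * F l + ((Q-1)/(Q*z)) * G l) :=
    (Equiv.addRight (1:ℤ)).tsum_eq (fun l => (1/Q) * F l + ((Q-1)/(Q*z)) * G l)
  have h2 : ∑' l, D l = (1/Q) * ∑' l, F l + ((Q-1)/(Q*z)) * ∑' l, G l := by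
    simp only [hDF]
    rw [h3, Summable.tsum_add (hF.mul_left _) (hG.mul_left _), tsum_mul_left, tsum_mul_left]
  have hkey := h1.symm.trans h2
  have hgoal : z * ((Q - 1) * w * ∑' l, H l)
      = z * w * (((Q - 1) * ∑' l, H l + ∑' l, F l) - ∑' l, F l) := by ring
  rw [hgoal, hkey]
  field_simp
  ring

/-- The discrete q-Laplace transform satisfies
`z L_{q,1}^{[d]}(δ_q g) = p L_{q,1}^{[d]}(ζ g) − p z L_{q,1}^{[d]}(g)` with `p = 1/q`,
where `δ_q g(ζ) = (g(qζ) − g(ζ))/(q−1)`, for `g` analytic along the discrete q-spiral with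
q-exponential growth ensuring convergence (formalized by nonvanishing of the denominators
and absolute summability of the series involved). -/
theorem qLaplace_delta_parts (q d : ℝ) (hq : 1 < q) (g : ℂ → ℂ) (z : ℂ) (hz : z ≠ 0)
    (hden : ∀ l : ℤ, qExp q ((q : ℂ) ^ (l + 1) * Complex.exp (Complex.I * d) / z) ≠ 0)
    (hsum : Summable fun l : ℤ =>
      ‖(q : ℂ) ^ l * g ((q : ℂ) ^ l * Complex.exp (Complex.I * d)) /
        (z * qExp q ((q : ℂ) ^ (l + 1) * Complex.exp (Complex.I * d) / z))‖)
    (hsum' : Summable fun l : ℤ =>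
      ‖(q : ℂ) ^ l * ((q : ℂ) ^ l * Complex.exp (Complex.I * d) *
          g ((q : ℂ) ^ l * Complex.exp (Complex.I * d))) /
        (z * qExp q ((q : ℂ) ^ (l + 1) * Complex.exp (Complex.I * d) / z))‖)
    (hsum'' : Summable fun l : ℤ =>
      ‖(q : ℂ) ^ l * ((g ((q : ℂ) * ((q : ℂ) ^ l * Complex.exp (Complex.I * d))) -
            g ((q : ℂ) ^ l * Complex.exp (Complex.I * d))) / ((q : ℂ) - 1)) /
        (z * qExp q ((q : ℂ) ^ (l + 1) * Complex.exp (Complex.I * d) / z))‖) :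
    z * qLaplace q d (fun ζ => (g ((q : ℂ) * ζ) - g ζ) / ((q : ℂ) - 1)) z =
      (1 / (q : ℂ)) * qLaplace q d (fun ζ => ζ * g ζ) z -
        (1 / (q : ℂ)) * z * qLaplace q d g z := by
  set w : ℂ := Complex.exp (Complex.I * d) with hw
  have hQ0 : (q:ℂ) ≠ 0 := by
    intro h
    have h' : (q:ℝ) = 0 := by exact_mod_cast h
    linarith
  have hQ1 : ((q:ℂ) - 1) ≠ 0 := by
    intro h
    have h' : (q:ℝ) = 1 := by exact_mod_cast sub_eq_zero.mp h
    linarith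
  -- the four sequences
  set F : ℤ → ℂ := fun l => (q:ℂ) ^ l * g ((q:ℂ) ^ l * w) /
    (z * qExp q ((q:ℂ) ^ (l+1) * w / z)) with hF
  set G : ℤ → ℂ := fun l => (q:ℂ) ^ l * ((q:ℂ) ^ l * w * g ((q:ℂ) ^ l * w)) /
    (z * qExp q ((q:ℂ) ^ (l+1) * w / z)) with hG
  set H : ℤ → ℂ := fun l => (q:ℂ) ^ l *
    ((g ((q:ℂ) * ((q:ℂ) ^ l * w)) - g ((q:ℂ) ^ l * w)) / ((q:ℂ) - 1)) /
    (z * qExp q ((q:ℂ) ^ (l+1) * w / z)) with hH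
  set D : ℤ → ℂ := fun l => (q:ℂ) ^ l * g ((q:ℂ) * ((q:ℂ) ^ l * w)) /
    (z * qExp q ((q:ℂ) ^ (l+1) * w / z)) with hD
  have hFs : Summable F := hsum.of_norm
  have hGs : Summable G := hsum'.of_norm
  have hHs : Summable H := hsum''.of_norm
  have hDH : ∀ l, D l = ((q:ℂ) - 1) * H l + F l := by
    intro l
    simp only [hD, hH, hF]
    have hd := hden l
    field_simp
    ring
  have hDF : ∀ l, D l = (1/(q:ℂ)) * F (l+1) + (((q:ℂ)-1)/((q:ℂ)*z)) * G (l+1) := by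
    intro l
    simp only [hD, hF, hG]
    have hfe : qExp q ((q:ℂ) ^ (l+1+1) * w / z)
        = (1 + ((q:ℂ)-1) * ((q:ℂ) ^ (l+1) * w / z)) * qExp q ((q:ℂ) ^ (l+1) * w / z) := by
      rw [show (q:ℂ) ^ (l+1+1) * w / z = (q:ℂ) * ((q:ℂ) ^ (l+1) * w / z) by
        rw [zpow_add_one₀ hQ0 (l+1)]; ring]
      exact qExp_funEq hq _
    have hden1 := hden (l+1)
    rw [hfe] at hden1
    obtain ⟨hfac, hEl⟩ := mul_ne_zero_iff.mp hden1
    rw [hfe]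
    have hNfrac : (1:ℂ) + ((q:ℂ)-1) * ((q:ℂ) ^ (l+1) * w / z)
        = (z + ((q:ℂ)-1) * ((q:ℂ) ^ (l+1) * w)) / z := by
      field_simp
    rw [hNfrac] at hfac ⊢
    have hfac' : z + ((q:ℂ)-1) * ((q:ℂ) ^ (l+1) * w) ≠ 0 := by
      intro h0
      exact hfac (by rw [h0, zero_div])
    have hzp' : (q:ℂ) ^ (l+1) * w = (q:ℂ) * ((q:ℂ) ^ l * w) := by
      rw [zpow_add_one₀ hQ0]; ring
    have hzp : (q:ℂ) ^ (l+1) = (q:ℂ) ^ l * (q:ℂ) := zpow_add_one₀ hQ0 l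
    rw [hzp'] at hfac' hEl ⊢
    rw [hzp]
    set El : ℂ := qExp q ((q:ℂ) * ((q:ℂ) ^ l * w) / z) with hElDef
    have hfac'' : -((q:ℂ) ^ l * (q:ℂ) * w) + (q:ℂ) ^ l * (q:ℂ) ^ 2 * w + z ≠ 0 := by
      convert hfac' using 1; ring
    field_simp
    ring_nf
    linear_combination (-(g ((q:ℂ) ^ l * (q:ℂ) * w))) * (mul_inv_cancel₀ hfac'')
  have := tsum_parts (q:ℂ) z w hQ0 hz F G H D hFs hGs hHs hDH hDF
  simpa only [qLaplace, hF, hG, hH, ← hw] using this
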